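/- arXiv:1604.03423 — 4 statements merged into one kernel-verified Lean document; each statement's English description precedes it below -/
import Mathlib

section
/- For all ε ∈ (0,1), the probability that ‖R‖ ≥ e·√n·(ln(n/ε)+2) is at most ε. -/
open scoped Matrix.Norms.L2Operator

noncomputable def opNorm {α β : Type*} [Fintype α] [Fintype β] [DecidableEq β]
    (M : Matrix α β ℝ) : ℝ :=
  ‖LinearMap.toContinuousLinearMap (Matrix.toEuclideanLin M)‖

def sgn (b : Bool) : ℝ := if b then 1 else -1

noncomputable def Pr {n : ℕ} (P : (Sym2 (Fin n) → Bool) → Prop) : ℝ := by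
  classical
  exact ((Finset.univ.filter P).card : ℝ) / (Fintype.card (Sym2 (Fin n) → Bool))

noncomputable def Ex {n : ℕ} (f : (Sym2 (Fin n) → Bool) → ℝ) : ℝ :=
  (∑ g : Sym2 (Fin n) → Bool, f g) / (Fintype.card (Sym2 (Fin n) → Bool))

noncomputable def Rmat {n : ℕ} (g : Sym2 (Fin n) → Bool) : Matrix (Fin n) (Fin n) ℝ :=
  Matrix.of fun i j => if i = j then 0 else sgn (g s(i, j))

def cyc {m : ℕ} (j : Fin m) : Fin m := ⟨((j : ℕ) + 1) % m, Nat.mod_lt _ j.pos⟩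

noncomputable def wprod {n m : ℕ} (A : Matrix (Fin n) (Fin n) ℝ) (w : Fin (m+1) → Fin n) : ℝ :=
  ∏ t : Fin m, A (w t.castSucc) (w t.succ)

lemma wprod_cons {n m : ℕ} (A : Matrix (Fin n) (Fin n) ℝ) (x : Fin n) (u : Fin (m+1) → Fin n) :
    wprod A (Fin.cons x u) = A x (u 0) * wprod A u := by
  unfold wprod
  rw [Fin.prod_univ_succ]
  simp [Fin.cons_succ, ← Fin.succ_castSucc]

lemma entry {n : ℕ} (A : Matrix (Fin n) (Fin n) ℝ) (m : ℕ) (i j : Fin n) :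
    (A ^ m) i j = ∑ w : Fin (m+1) → Fin n,
      if w 0 = i ∧ w (Fin.last m) = j then wprod A w else 0 := by
  induction m generalizing i j with
  | zero =>
    have he := Fintype.sum_equiv (Fin.consEquiv (fun _ : Fin 1 => Fin n))
      (fun p : Fin n × (Fin 0 → Fin n) => if p.1 = i ∧ p.1 = j then wprod A (Fin.cons p.1 p.2) else 0)
      (fun w : Fin 1 → Fin n => if w 0 = i ∧ w (Fin.last 0) = j then wprod A w else 0)
      (fun p => by simp [Fin.consEquiv])
    rw [← he]
    have h1 : ∀ p : Fin n × (Fin 0 → Fin n), wprod A (Fin.cons p.1 p.2) = 1 := by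
      intro p; unfold wprod; simp
    simp only [h1]
    rw [Fintype.sum_prod_type]
    simp only [Finset.sum_const, Finset.card_univ, Fintype.card_fun, Fintype.card_fin,
      pow_zero, smul_eq_mul, mul_one, and_self]
    by_cases hij : i = j
    · subst hij
      simp only [and_self, pow_zero, Matrix.one_apply_eq]
      simp [Finset.sum_ite_eq']
    · rw [Matrix.one_apply_ne hij, Finset.sum_eq_zero]
      intro x _
      have : ¬ (x = i ∧ x = j) := by rintro ⟨rfl, rfl⟩; exact hij rfl
      simp [this]
  | succ m ih =>
    have he := Fintype.sum_equiv (Fin.consEquiv (fun _ : Fin (m+2) => Fin n))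
      (fun p : Fin n × (Fin (m+1) → Fin n) =>
        if Fin.cons (α := fun _ => Fin n) p.1 p.2 0 = i ∧ Fin.cons (α := fun _ => Fin n) p.1 p.2 (Fin.last (m+1)) = j
          then wprod A (Fin.cons p.1 p.2) else 0)
      (fun w : Fin (m+2) → Fin n => if w 0 = i ∧ w (Fin.last (m+1)) = j then wprod A w else 0)
      (fun p => rfl)
    rw [← he, pow_succ', Matrix.mul_apply]
    rw [Fintype.sum_prod_type]
    have hlast : ∀ (x : Fin n) (u : Fin (m+1) → Fin n),
        Fin.cons (α := fun _ => Fin n) x u (Fin.last (m+1)) = u (Fin.last m) := by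
      intro x u
      rw [← Fin.succ_last, Fin.cons_succ]
    calc ∑ l, A i l * (A ^ m) l j
        = ∑ l, ∑ u : Fin (m+1) → Fin n,
            if u 0 = l ∧ u (Fin.last m) = j then A i l * wprod A u else 0 := by
          apply Finset.sum_congr rfl
          intro l _
          rw [ih l j, Finset.mul_sum]
          apply Finset.sum_congr rfl
          intro u _
          rw [mul_ite, mul_zero]
      _ = ∑ u : Fin (m+1) → Fin n, ∑ l,
            if u 0 = l then (if u (Fin.last m) = j then A i l * wprod A u else 0) else 0 := by
          rw [Finset.sum_comm]
          apply Finset.sum_congr rfl; intro u _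
          apply Finset.sum_congr rfl; intro l _
          by_cases h1 : u 0 = l <;> by_cases h2 : u (Fin.last m) = j <;> simp [h1, h2]
      _ = ∑ u : Fin (m+1) → Fin n,
            if u (Fin.last m) = j then A i (u 0) * wprod A u else 0 := by
          apply Finset.sum_congr rfl; intro u _
          rw [Finset.sum_ite_eq]
          simp
      _ = ∑ x, ∑ u : Fin (m+1) → Fin n,
            if Fin.cons (α := fun _ => Fin n) x u 0 = i ∧ Fin.cons (α := fun _ => Fin n) x u (Fin.last (m+1)) = j
              then wprod A (Fin.cons x u) else 0 := by
          rw [Finset.sum_comm]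
          apply Finset.sum_congr rfl; intro u _
          simp only [Fin.cons_zero, hlast, wprod_cons]
          simp only [ite_and]
          rw [Finset.sum_ite_eq' Finset.univ]
          by_cases h2 : u (Fin.last m) = j <;> simp [h2]


def stepEdge {n m : ℕ} (w : Fin (m+1) → Fin n) (t : Fin m) : Sym2 (Fin n) :=
  s(w t.castSucc, w t.succ)

def multE {n m : ℕ} (w : Fin (m+1) → Fin n) (e : Sym2 (Fin n)) : ℕ :=
  (Finset.univ.filter (fun t => stepEdge w t = e)).card

def EvenW {n m : ℕ} (w : Fin (m+1) → Fin n) : Prop := ∀ e, Even (multE w e)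

instance {n m : ℕ} (w : Fin (m+1) → Fin n) : Decidable (EvenW w) :=
  Fintype.decidableForallFintype

lemma trace_pow {n : ℕ} (A : Matrix (Fin n) (Fin n) ℝ) (m : ℕ) :
    (A ^ m).trace = ∑ w : Fin (m+1) → Fin n,
      if w (Fin.last m) = w 0 then wprod A w else 0 := by
  rw [Matrix.trace]
  calc ∑ i, (A ^ m).diag i
      = ∑ i, ∑ w : Fin (m+1) → Fin n,
          if w 0 = i ∧ w (Fin.last m) = i then wprod A w else 0 := by
        apply Finset.sum_congr rfl; intro i _
        exact entry A m i i
    _ = ∑ w : Fin (m+1) → Fin n, ∑ i,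
          if w 0 = i then (if w (Fin.last m) = w 0 then wprod A w else 0) else 0 := by
        rw [Finset.sum_comm]
        apply Finset.sum_congr rfl; intro w _
        apply Finset.sum_congr rfl; intro i _
        by_cases h1 : w 0 = i
        · subst h1; simp
        · simp [h1]
    _ = ∑ w : Fin (m+1) → Fin n,
          if w (Fin.last m) = w 0 then wprod A w else 0 := by
        apply Finset.sum_congr rfl; intro w _
        rw [Finset.sum_ite_eq]
        simp

lemma sum_g {n m : ℕ} (w : Fin (m+1) → Fin n) :
    ∑ g : Sym2 (Fin n) → Bool, wprod (Rmat g) w ≤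
      if EvenW w then (Fintype.card (Sym2 (Fin n) → Bool) : ℝ) else 0 := by
  classical
  by_cases hd : ∃ t : Fin m, w t.castSucc = w t.succ
  · obtain ⟨t0, ht0⟩ := hd
    have hz : ∀ g : Sym2 (Fin n) → Bool, wprod (Rmat g) w = 0 := by
      intro g
      apply Finset.prod_eq_zero (Finset.mem_univ t0)
      simp [Rmat, ht0]
    rw [Finset.sum_congr rfl (fun g _ => hz g), Finset.sum_const, smul_zero]
    split <;> positivity
  · push_neg at hd
    have hw : ∀ g : Sym2 (Fin n) → Bool,
        wprod (Rmat g) w = ∏ t : Fin m, sgn (g (stepEdge w t)) := by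
      intro g
      apply Finset.prod_congr rfl
      intro t _
      simp [Rmat, hd t, stepEdge]
    by_cases he : EvenW w
    · have h1 : ∀ g : Sym2 (Fin n) → Bool, wprod (Rmat g) w = 1 := by
        intro g
        rw [hw g, Finset.prod_comp (fun e => sgn (g e)) (stepEdge w)]
        apply Finset.prod_eq_one
        intro e _
        show sgn (g e) ^ multE w e = 1
        obtain ⟨r, hr⟩ := he e
        have h2 : multE w e = 2 * r := by omega
        have hsq : sgn (g e) * sgn (g e) = 1 := by cases h : g e <;> simp [sgn, h]
        rw [h2, pow_mul, sq, hsq, one_pow]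
      rw [Finset.sum_congr rfl (fun g _ => h1 g), Finset.sum_const, nsmul_eq_mul, mul_one]
      simp [he, Finset.card_univ]
    · simp only [he, if_false]
      obtain ⟨e0, he0⟩ : ∃ e, ¬ Even (multE w e) := by
        by_contra h; push_neg at h; exact he h
      apply le_of_eq
      apply Finset.sum_involution
        (g := fun (g : Sym2 (Fin n) → Bool) _ => Function.update g e0 (!(g e0)))
      · intro g _
        rw [hw, hw]
        have hsplit : ∀ g' : Sym2 (Fin n) → Bool, ∏ t : Fin m, sgn (g' (stepEdge w t)) =
            (∏ t ∈ Finset.univ.filter (fun t => stepEdge w t = e0), sgn (g' (stepEdge w t))) *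
            ∏ t ∈ Finset.univ.filter (fun t => ¬ stepEdge w t = e0), sgn (g' (stepEdge w t)) := by
          intro g'
          rw [Finset.prod_filter_mul_prod_filter_not]
        rw [hsplit, hsplit]
        have hA : ∏ t ∈ Finset.univ.filter (fun t => stepEdge w t = e0),
            sgn (g (stepEdge w t)) = sgn (g e0) ^ multE w e0 := by
          rw [Finset.prod_congr rfl (fun t ht => by
            rw [(Finset.mem_filter.mp ht).2]), Finset.prod_const]
          rfl
        have hsgn : sgn (!(g e0)) = - sgn (g e0) := by cases h : g e0 <;> simp [sgn, h]
        have hB : ∏ t ∈ Finset.univ.filter (fun t => stepEdge w t = e0),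
            sgn (Function.update g e0 (!(g e0)) (stepEdge w t)) = (- sgn (g e0)) ^ multE w e0 := by
          have h2 : ∏ t ∈ Finset.univ.filter (fun t => stepEdge w t = e0),
              sgn (Function.update g e0 (!(g e0)) (stepEdge w t)) = (sgn (!(g e0))) ^ multE w e0 := by
            rw [Finset.prod_congr rfl (fun t ht => by
              rw [(Finset.mem_filter.mp ht).2, Function.update_self]), Finset.prod_const]
            rfl
          rw [h2, hsgn]
        have hC : ∏ t ∈ Finset.univ.filter (fun t => ¬ stepEdge w t = e0),
            sgn (Function.update g e0 (!(g e0)) (stepEdge w t)) =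
            ∏ t ∈ Finset.univ.filter (fun t => ¬ stepEdge w t = e0),
            sgn (g (stepEdge w t)) := by
          apply Finset.prod_congr rfl
          intro t ht
          rw [Function.update_of_ne (Finset.mem_filter.mp ht).2]
        rw [hA, hB, hC, (Nat.not_even_iff_odd.mp he0).neg_pow]
        ring
      · intro g _ _
        intro hcontra
        have := congrFun hcontra e0
        simp at this
      · intro g _; exact Finset.mem_univ _
      · intro g _
        funext e
        by_cases h : e = e0
        · subst h; simp
        · simp [Function.update_of_ne h]

noncomputable def fo {n m : ℕ} (w : Fin (m+1) → Fin n) (v : Fin n) : Fin (m+1) := by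
  classical
  exact if h : (Finset.univ.filter (fun j => w j = v)).Nonempty
    then (Finset.univ.filter (fun j => w j = v)).min' h else 0

lemma fo_spec {n m : ℕ} {w : Fin (m+1) → Fin n} {v : Fin n} (h : ∃ j, w j = v) :
    w (fo w v) = v ∧ ∀ j, w j = v → fo w v ≤ j := by
  classical
  obtain ⟨j0, hj0⟩ := h
  have hne : (Finset.univ.filter (fun j => w j = v)).Nonempty :=
    ⟨j0, Finset.mem_filter.mpr ⟨Finset.mem_univ _, hj0⟩⟩
  unfold fo
  rw [dif_pos hne]
  constructor
  · exact (Finset.mem_filter.mp ((Finset.univ.filter (fun j => w j = v)).min'_mem hne)).2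
  · intro j hj
    exact Finset.min'_le _ j (Finset.mem_filter.mpr ⟨Finset.mem_univ _, hj⟩)

noncomputable def rk {n m : ℕ} (w : Fin (m+1) → Fin n) (v : Fin n) : ℕ := by
  classical
  exact (Finset.univ.filter (fun u : Fin n => (∃ j, w j = u) ∧ fo w u < fo w v)).card

lemma fo_inj {n m : ℕ} {w : Fin (m+1) → Fin n} {u v : Fin n}
    (hu : ∃ j, w j = u) (hv : ∃ j, w j = v) (h : fo w u = fo w v) : u = v := by
  rw [← (fo_spec hu).1, ← (fo_spec hv).1, h]

lemma rk_lt {n m : ℕ} {w : Fin (m+1) → Fin n} {u v : Fin n}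
    (hu : ∃ j, w j = u) (hv : ∃ j, w j = v) (h : fo w u < fo w v) : rk w u < rk w v := by
  classical
  unfold rk
  apply Finset.card_lt_card
  constructor
  · intro x hx
    rw [Finset.mem_filter] at hx ⊢
    exact ⟨hx.1, hx.2.1, lt_trans hx.2.2 h⟩
  · intro hsub
    have hu_mem : u ∈ Finset.univ.filter
        (fun x : Fin n => (∃ j, w j = x) ∧ fo w x < fo w v) :=
      Finset.mem_filter.mpr ⟨Finset.mem_univ _, hu, h⟩
    have := hsub hu_mem
    rw [Finset.mem_filter] at this
    exact lt_irrefl _ this.2.2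

lemma rk_inj {n m : ℕ} {w : Fin (m+1) → Fin n} {u v : Fin n}
    (hu : ∃ j, w j = u) (hv : ∃ j, w j = v) (h : rk w u = rk w v) : u = v := by
  rcases lt_trichotomy (fo w u) (fo w v) with hlt | heq | hgt
  · exact absurd h (Nat.ne_of_lt (rk_lt hu hv hlt))
  · exact fo_inj hu hv heq
  · exact absurd h.symm (Nat.ne_of_lt (rk_lt hv hu hgt))

lemma rk_lt_card {n m : ℕ} {w : Fin (m+1) → Fin n} {v : Fin n} (hv : ∃ j, w j = v) :
    rk w v + 1 ≤ (Finset.univ.filter (fun u : Fin n => ∃ j, w j = u)).card := by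
  classical
  have hsub : Finset.univ.filter (fun u : Fin n => (∃ j, w j = u) ∧ fo w u < fo w v) ⊆
      (Finset.univ.filter (fun u : Fin n => ∃ j, w j = u)).erase v := by
    intro x hx
    rw [Finset.mem_filter] at hx
    apply Finset.mem_erase.mpr
    refine ⟨?_, Finset.mem_filter.mpr ⟨Finset.mem_univ _, hx.2.1⟩⟩
    rintro rfl
    exact lt_irrefl _ hx.2.2
  have h1 : rk w v ≤ ((Finset.univ.filter (fun u : Fin n => ∃ j, w j = u)).erase v).card :=
    Finset.card_le_card hsub
  have hvmem : v ∈ Finset.univ.filter (fun u : Fin n => ∃ j, w j = u) :=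
    Finset.mem_filter.mpr ⟨Finset.mem_univ _, hv⟩
  rw [Finset.card_erase_of_mem hvmem] at h1
  have : 1 ≤ (Finset.univ.filter (fun u : Fin n => ∃ j, w j = u)).card :=
    Finset.card_pos.mpr ⟨v, hvmem⟩
  omega

lemma card_range_le {n k : ℕ} (hk : 1 ≤ k) (w : Fin (2*k+1) → Fin n)
    (hc : w (Fin.last (2*k)) = w 0) (he : EvenW w) :
    (Finset.univ.filter (fun v : Fin n => ∃ j, w j = v)).card ≤ k + 1 := by
  classical
  set E := Finset.image (stepEdge w) Finset.univ with hE
  have hEcard : E.card ≤ k := by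
    have hsum : (Finset.univ : Finset (Fin (2*k))).card
        = ∑ e ∈ E, (Finset.univ.filter (fun t => stepEdge w t = e)).card :=
      Finset.card_eq_sum_card_fiberwise (fun t _ => Finset.mem_image_of_mem _ (Finset.mem_univ t))
    have h2 : ∀ e ∈ E, 2 ≤ (Finset.univ.filter (fun t => stepEdge w t = e)).card := by
      intro e heE
      obtain ⟨t, _, ht⟩ := Finset.mem_image.mp heE
      have h1 : 0 < (Finset.univ.filter (fun t => stepEdge w t = e)).card :=
        Finset.card_pos.mpr ⟨t, Finset.mem_filter.mpr ⟨Finset.mem_univ _, ht⟩⟩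
      obtain ⟨r, hr⟩ := he e
      show 2 ≤ multE w e
      have : multE w e = (Finset.univ.filter (fun t => stepEdge w t = e)).card := rfl
      omega
    have := Finset.card_nsmul_le_sum E
      (fun e => (Finset.univ.filter (fun t => stepEdge w t = e)).card) 2 h2
    simp only [smul_eq_mul, Finset.card_univ, Fintype.card_fin] at hsum this
    omega
  -- injection from range minus w 0 into E
  have hkey : ((Finset.univ.filter (fun v : Fin n => ∃ j, w j = v)).erase (w 0)).card ≤ E.card := by
    apply Finset.card_le_card_of_injOn
      (fun v => stepEdge w ⟨(fo w v : ℕ) - 1, by omega⟩)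
    · intro v _
      exact Finset.mem_image_of_mem _ (Finset.mem_univ _)
    · intro u hu v hv hf
      simp only [Finset.coe_erase, Set.mem_diff, Finset.mem_coe, Finset.mem_filter] at hu hv
      obtain ⟨⟨-, hu_r⟩, hu_ne⟩ := hu
      obtain ⟨⟨-, hv_r⟩, hv_ne⟩ := hv
      have hu_ne : u ≠ w 0 := by simpa using hu_ne
      have hv_ne : v ≠ w 0 := by simpa using hv_ne
      -- properties of fo
      have hu_spec := fo_spec hu_r
      have hv_spec := fo_spec hv_r
      have hu0 : (fo w u : ℕ) ≠ 0 := by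
        intro h0
        apply hu_ne
        rw [← hu_spec.1]
        congr 1
        exact Fin.ext h0
      have hulast : (fo w u : ℕ) ≠ 2*k := by
        intro h0
        apply hu_ne
        rw [← hu_spec.1]
        rw [show fo w u = Fin.last (2*k) from Fin.ext h0]
        exact hc
      have hv0 : (fo w v : ℕ) ≠ 0 := by
        intro h0
        apply hv_ne
        rw [← hv_spec.1]
        congr 1
        exact Fin.ext h0
      have hvlast : (fo w v : ℕ) ≠ 2*k := by
        intro h0
        apply hv_ne
        rw [← hv_spec.1]
        rw [show fo w v = Fin.last (2*k) from Fin.ext h0]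
        exact hc
      have hub : (fo w u : ℕ) ≤ 2*k := Nat.lt_succ_iff.mp (fo w u).isLt
      have hvb : (fo w v : ℕ) ≤ 2*k := Nat.lt_succ_iff.mp (fo w v).isLt
      -- succ of the index is fo
      have hsucc_u : (⟨(fo w u : ℕ) - 1, by omega⟩ : Fin (2*k)).succ = fo w u := by
        apply Fin.ext
        simp only [Fin.val_succ]
        omega
      have hsucc_v : (⟨(fo w v : ℕ) - 1, by omega⟩ : Fin (2*k)).succ = fo w v := by
        apply Fin.ext
        simp only [Fin.val_succ]
        omega
      simp only [stepEdge, hsucc_u, hsucc_v, hu_spec.1, hv_spec.1] at hf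
      rw [Sym2.eq_iff] at hf
      rcases hf with ⟨-, h2⟩ | ⟨h1, h2⟩
      · exact h2
      · -- cross case: contradiction with minimality
        exfalso
        have hle1 : fo w v ≤ (⟨(fo w u : ℕ) - 1, by omega⟩ : Fin (2*k)).castSucc :=
          hv_spec.2 _ h1
        have hle2 : fo w u ≤ (⟨(fo w v : ℕ) - 1, by omega⟩ : Fin (2*k)).castSucc :=
          hu_spec.2 _ h2.symm
        simp only [Fin.le_def, Fin.coe_castSucc] at hle1 hle2
        omega
  have h0mem : w 0 ∈ Finset.univ.filter (fun v : Fin n => ∃ j, w j = v) :=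
    Finset.mem_filter.mpr ⟨Finset.mem_univ _, 0, rfl⟩
  have := Finset.card_erase_of_mem h0mem
  omega

noncomputable def decf {n m : ℕ} (w : Fin (m+1) → Fin n) (k : ℕ) (i : Fin (k+1)) : Fin n := by
  classical
  exact if h : ∃ v, (∃ j, w j = v) ∧ rk w v = (i : ℕ) then h.choose else w 0

lemma decf_rk {n m k : ℕ} {w : Fin (m+1) → Fin n} {x : Fin n} (hx : ∃ j, w j = x)
    (hlt : rk w x < k + 1) : decf w k ⟨rk w x, hlt⟩ = x := by
  classical
  have h : ∃ v, (∃ j, w j = v) ∧ rk w v = ((⟨rk w x, hlt⟩ : Fin (k+1)) : ℕ) := ⟨x, hx, rfl⟩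
  unfold decf
  rw [dif_pos h]
  exact rk_inj h.choose_spec.1 hx h.choose_spec.2

lemma count_le {n k : ℕ} (hk : 1 ≤ k) [DecidablePred (fun w : Fin (2*k+1) → Fin n =>
      w (Fin.last (2*k)) = w 0 ∧ EvenW w)] :
    (Finset.univ.filter (fun w : Fin (2*k+1) → Fin n =>
      w (Fin.last (2*k)) = w 0 ∧ EvenW w)).card ≤ n^(k+1) * (k+1)^(2*k) := by
  classical
  have hcard : ((Finset.univ : Finset ((Fin (k+1) → Fin n) × (Fin (2*k) → Fin (k+1))))).card
      = n^(k+1) * (k+1)^(2*k) := by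
    simp [Fintype.card_prod, Fintype.card_fun]
  rw [← hcard]
  apply Finset.card_le_card_of_injOn
    (fun w => (decf w k, fun t : Fin (2*k) =>
      (⟨min (rk w (w t.castSucc)) k, by omega⟩ : Fin (k+1))))
  · intro w _; exact Finset.mem_univ _
  · intro w hw w' hw' heq
    simp only [Finset.coe_filter, Set.mem_setOf_eq, Finset.mem_univ, true_and] at hw hw'
    obtain ⟨hwc, hwe⟩ := hw
    obtain ⟨hwc', hwe'⟩ := hw'
    have hrk : ∀ x : Fin n, (∃ j, w j = x) → rk w x < k + 1 := by
      intro x hx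
      have h1 := rk_lt_card hx
      have h2 := card_range_le hk w hwc hwe
      omega
    have hrk' : ∀ x : Fin n, (∃ j, w' j = x) → rk w' x < k + 1 := by
      intro x hx
      have h1 := rk_lt_card hx
      have h2 := card_range_le hk w' hwc' hwe'
      omega
    have hrec : ∀ t : Fin (2*k), w t.castSucc = w' t.castSucc := by
      intro t
      have hx : ∃ j, w j = w t.castSucc := ⟨t.castSucc, rfl⟩
      have hx' : ∃ j, w' j = w' t.castSucc := ⟨t.castSucc, rfl⟩
      have hlt := hrk _ hx
      have hlt' := hrk' _ hx'
      have hmin : min (rk w (w t.castSucc)) k = rk w (w t.castSucc) := by omega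
      have hmin' : min (rk w' (w' t.castSucc)) k = rk w' (w' t.castSucc) := by omega
      have h1 := congrFun (congrArg Prod.snd heq) t
      simp only at h1
      have hval : rk w (w t.castSucc) = rk w' (w' t.castSucc) := by
        have := congrArg Fin.val h1
        simpa [hmin, hmin'] using this
      have h2 := congrArg Prod.fst heq
      calc w t.castSucc = decf w k ⟨rk w (w t.castSucc), hlt⟩ := (decf_rk hx hlt).symm
        _ = decf w' k ⟨rk w' (w' t.castSucc), hlt'⟩ := by
            rw [show (⟨rk w (w t.castSucc), hlt⟩ : Fin (k+1))
              = ⟨rk w' (w' t.castSucc), hlt'⟩ from Fin.ext hval]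
            exact congrFun h2 _
        _ = w' t.castSucc := decf_rk hx' hlt'
    funext j
    by_cases hj : (j : ℕ) < 2*k
    · have : j = (⟨(j : ℕ), hj⟩ : Fin (2*k)).castSucc := Fin.ext rfl
      rw [this]
      exact hrec _
    · have hj2 : j = Fin.last (2*k) := by
        apply Fin.ext
        have := j.isLt
        simp only [Fin.val_last]
        omega
      subst hj2
      have h0 : (0 : Fin (2*k+1)) = (⟨0, by omega⟩ : Fin (2*k)).castSucc := Fin.ext rfl
      rw [hwc, hwc', h0]
      exact hrec _

open scoped Matrix.Norms.L2Operator

lemma rmat_selfAdjoint {n : ℕ} (g : Sym2 (Fin n) → Bool) : IsSelfAdjoint (Rmat g) := by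
  have h : Matrix.conjTranspose (Rmat g) = Rmat g := by
    ext i j
    simp only [Matrix.conjTranspose_apply, Rmat, Matrix.of_apply, star_trivial]
    by_cases h : i = j
    · subst h; simp
    · rw [if_neg h, if_neg (Ne.symm h), Sym2.eq_swap]
  exact h

lemma norm_pow_le_of_selfAdjoint {n : ℕ} {A : Matrix (Fin n) (Fin n) ℝ}
    (hA : IsSelfAdjoint A) (m : ℕ) (hm : 1 ≤ m) : ‖A‖₊ ^ m ≤ ‖A ^ m‖₊ := by
  by_cases h0 : ‖A‖₊ = 0
  · have hA0 : A = 0 := by rwa [nnnorm_eq_zero] at h0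
    subst hA0
    rw [zero_pow (by omega), h0, zero_pow (by omega)]
  · obtain ⟨j, hj⟩ : ∃ j, m < 2^j := ⟨m, Nat.lt_two_pow_self⟩
    have key : ‖A‖₊ ^ (2^j) = ‖A ^ (2^j)‖₊ := (hA.nnnorm_pow_two_pow j).symm
    have hsplit : A ^ (2^j) = A ^ m * A ^ (2^j - m) := by
      rw [← pow_add]
      congr 1
      omega
    have hle : ‖A ^ (2^j)‖₊ ≤ ‖A ^ m‖₊ * ‖A‖₊ ^ (2^j - m) := by
      rw [hsplit]
      calc ‖A ^ m * A ^ (2^j - m)‖₊ ≤ ‖A ^ m‖₊ * ‖A ^ (2^j - m)‖₊ := nnnorm_mul_le _ _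
        _ ≤ ‖A ^ m‖₊ * ‖A‖₊ ^ (2^j - m) := by
            apply mul_le_mul_right
            exact nnnorm_pow_le' A (by omega)
    have key2 : ‖A‖₊ ^ m * ‖A‖₊ ^ (2^j - m) = ‖A ^ (2^j)‖₊ := by
      rw [← pow_add, show m + (2^j - m) = 2^j by omega, key]
    have hpos : 0 < ‖A‖₊ ^ (2^j - m) := pow_pos (pos_iff_ne_zero.mpr h0) _
    exact le_of_mul_le_mul_right (key2.le.trans hle) hpos

set_option maxHeartbeats 1000000 in
lemma frob {n : ℕ} (B : Matrix (Fin n) (Fin n) ℝ) :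
    ‖B‖ ^ 2 ≤ ∑ i : Fin n, ∑ j : Fin n, (B i j) ^ 2 := by
  set S := ∑ i : Fin n, ∑ j : Fin n, (B i j) ^ 2 with hS
  have hS0 : 0 ≤ S := by positivity
  have hB : ‖B‖ ≤ Real.sqrt S := by
    rw [Matrix.l2_opNorm_def]
    apply ContinuousLinearMap.opNorm_le_bound _ (Real.sqrt_nonneg _)
    intro x
    have hx0 : (0:ℝ) ≤ ∑ j, (x j) ^ 2 := by positivity
    have hnx : ‖x‖ = Real.sqrt (∑ j, (x j) ^ 2) := by
      rw [EuclideanSpace.norm_eq]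
      congr 1
      apply Finset.sum_congr rfl
      intro j _
      rw [Real.norm_eq_abs, sq_abs]
    have happly : ∀ i, ((Matrix.toEuclideanLin.trans LinearMap.toContinuousLinearMap B) x) i
        = ∑ j, B i j * x j := by
      intro i
      simp only [LinearEquiv.trans_apply, LinearMap.coe_toContinuousLinearMap',
        Matrix.toEuclideanLin_apply, PiLp.toLp_apply, Matrix.mulVec,
        dotProduct]
    have hnorm2 : ‖(Matrix.toEuclideanLin.trans LinearMap.toContinuousLinearMap B) x‖
        = Real.sqrt (∑ i, (∑ j, B i j * x j) ^ 2) := by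
      rw [EuclideanSpace.norm_eq]
      congr 1
      apply Finset.sum_congr rfl
      intro i _
      rw [happly, Real.norm_eq_abs, sq_abs]
    rw [hnorm2, hnx]
    rw [← Real.sqrt_mul hS0]
    apply Real.sqrt_le_sqrt
    calc ∑ i, (∑ j, B i j * x j) ^ 2
        ≤ ∑ i, (∑ j, (B i j) ^ 2) * (∑ j, (x j) ^ 2) := by
          apply Finset.sum_le_sum
          intro i _
          exact Finset.sum_mul_sq_le_sq_mul_sq _ _ _
      _ = S * ∑ j, (x j) ^ 2 := by rw [hS, ← Finset.sum_mul]
  calc ‖B‖ ^ 2 ≤ Real.sqrt S ^ 2 := by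
        apply pow_le_pow_left₀ (norm_nonneg _) hB
    _ = S := Real.sq_sqrt hS0


lemma opNorm_eq {n : ℕ} (M : Matrix (Fin n) (Fin n) ℝ) : opNorm M = ‖M‖ := rfl

lemma norm_pow_le_trace {n k : ℕ} (hk : 1 ≤ k) {A : Matrix (Fin n) (Fin n) ℝ}
    (hA : IsSelfAdjoint A) : ‖A‖ ^ (2*k) ≤ (A ^ (2*k)).trace := by
  have hpowk : ‖A‖ ^ k ≤ ‖A ^ k‖ := by
    have := norm_pow_le_of_selfAdjoint hA k hk
    exact_mod_cast NNReal.coe_le_coe.mpr this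
  have hsymm : ∀ i j, (A ^ k) j i = (A ^ k) i j := by
    intro i j
    have h3 : Matrix.conjTranspose (A ^ k) = A ^ k := hA.pow k
    calc (A ^ k) j i = (Matrix.conjTranspose (A ^ k)) i j := by
          simp [Matrix.conjTranspose_apply]
      _ = (A ^ k) i j := by rw [h3]
  have htr : (A ^ (2*k)).trace = ∑ i, ∑ j, ((A ^ k) i j) ^ 2 := by
    rw [show 2*k = k + k by ring, pow_add, Matrix.trace]
    apply Finset.sum_congr rfl
    intro i _
    show (A ^ k * A ^ k) i i = _
    rw [Matrix.mul_apply]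
    apply Finset.sum_congr rfl
    intro j _
    rw [hsymm i j, sq]
  rw [htr]
  calc ‖A‖ ^ (2*k) = (‖A‖ ^ k) ^ 2 := by rw [← pow_mul, mul_comm]
    _ ≤ ‖A ^ k‖ ^ 2 := pow_le_pow_left₀ (by positivity) hpowk 2
    _ ≤ ∑ i, ∑ j, ((A ^ k) i j) ^ 2 := frob _

lemma sum_opnorm_le {n k : ℕ} (hk : 1 ≤ k) :
    ∑ g : Sym2 (Fin n) → Bool, opNorm (Rmat g) ^ (2*k) ≤
      (Fintype.card (Sym2 (Fin n) → Bool) : ℝ) * ((n:ℝ)^(k+1) * ((k:ℝ)+1)^(2*k)) := by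
  classical
  set N := (Fintype.card (Sym2 (Fin n) → Bool) : ℝ) with hN
  calc ∑ g : Sym2 (Fin n) → Bool, opNorm (Rmat g) ^ (2*k)
      ≤ ∑ g : Sym2 (Fin n) → Bool, ((Rmat g) ^ (2*k)).trace := by
        apply Finset.sum_le_sum
        intro g _
        rw [opNorm_eq]
        exact norm_pow_le_trace hk (rmat_selfAdjoint g)
    _ = ∑ w : Fin (2*k+1) → Fin n, (if w (Fin.last (2*k)) = w 0 then
          ∑ g : Sym2 (Fin n) → Bool, wprod (Rmat g) w else 0) := by
        rw [Finset.sum_congr rfl (fun g _ => trace_pow (Rmat g) (2*k)), Finset.sum_comm]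
        apply Finset.sum_congr rfl
        intro w _
        by_cases hc : w (Fin.last (2*k)) = w 0 <;> simp [hc]
    _ ≤ ∑ w : Fin (2*k+1) → Fin n, (if w (Fin.last (2*k)) = w 0 ∧ EvenW w then N else 0) := by
        apply Finset.sum_le_sum
        intro w _
        by_cases hc : w (Fin.last (2*k)) = w 0
        · rw [if_pos hc]
          refine le_trans (sum_g w) ?_
          by_cases he : EvenW w
          · rw [if_pos he, if_pos ⟨hc, he⟩]
          · rw [if_neg he, if_neg (fun h => he h.2)]
        · rw [if_neg hc, if_neg (fun h => hc h.1)]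
    _ = ((Finset.univ.filter (fun w : Fin (2*k+1) → Fin n =>
          w (Fin.last (2*k)) = w 0 ∧ EvenW w)).card : ℝ) * N := by
        rw [← Finset.sum_filter, Finset.sum_const, nsmul_eq_mul]
    _ ≤ ((n:ℝ)^(k+1) * ((k:ℝ)+1)^(2*k)) * N := by
        apply mul_le_mul_of_nonneg_right _ (by rw [hN]; positivity)
        have hcount := count_le (n := n) hk
        have : (((Finset.univ.filter (fun w : Fin (2*k+1) → Fin n =>
            w (Fin.last (2*k)) = w 0 ∧ EvenW w)).card : ℝ)) ≤ ((n^(k+1) * (k+1)^(2*k) : ℕ) : ℝ) := by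
          exact_mod_cast hcount
        refine le_trans this (le_of_eq ?_)
        push_cast
        ring
    _ = N * ((n:ℝ)^(k+1) * ((k:ℝ)+1)^(2*k)) := by ring

lemma opNorm_nonneg {n : ℕ} (M : Matrix (Fin n) (Fin n) ℝ) : 0 ≤ opNorm M :=
  norm_nonneg _

theorem stmt2 (n : ℕ) (hn : 1 ≤ n) (ε : ℝ) (hε0 : 0 < ε) (hε1 : ε < 1) :
    Pr (fun g : Sym2 (Fin n) → Bool =>
        Real.exp 1 * Real.sqrt n * (Real.log (n / ε) + 2) ≤ opNorm (Rmat g)) ≤ ε := by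
  classical
  have hn0 : (0:ℝ) < n := by exact_mod_cast hn
  have hn1 : (1:ℝ) ≤ n := by exact_mod_cast hn
  set L := Real.log ((n:ℝ) / ε) with hLdef
  have hL0 : 0 < L := Real.log_pos ((one_lt_div hε0).mpr (lt_of_lt_of_le hε1 hn1))
  set k := ⌈L / 2⌉₊ with hkdef
  have hk1 : 1 ≤ k := Nat.ceil_pos.mpr (by positivity)
  have h2k_ge : L ≤ 2 * (k:ℝ) := by
    have := Nat.le_ceil (L / 2)
    linarith
  have h2k_le : 2 * (k:ℝ) ≤ L + 2 := by
    have := Nat.ceil_lt_add_one (show (0:ℝ) ≤ L / 2 by positivity)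
    linarith
  have hk1s : (k:ℝ) + 1 ≤ L + 2 := by linarith
  have hs0 : (0:ℝ) < L + 2 := by linarith
  set t := Real.exp 1 * Real.sqrt n * (L + 2) with htdef
  have hsqrt0 : 0 < Real.sqrt n := Real.sqrt_pos.mpr hn0
  have ht0 : 0 < t := by
    rw [htdef]
    exact mul_pos (mul_pos (Real.exp_pos 1) hsqrt0) hs0
  set P := fun g : Sym2 (Fin n) → Bool => t ≤ opNorm (Rmat g) with hPdef
  set N := (Fintype.card (Sym2 (Fin n) → Bool) : ℝ) with hNdef
  have hN0 : 0 < N := by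
    rw [hNdef]
    exact_mod_cast Fintype.card_pos
  have hmarkov : ((Finset.univ.filter P).card : ℝ) * t ^ (2*k) ≤
      ∑ g : Sym2 (Fin n) → Bool, opNorm (Rmat g) ^ (2*k) := by
    calc ((Finset.univ.filter P).card : ℝ) * t ^ (2*k)
        = ∑ _g ∈ Finset.univ.filter P, t ^ (2*k) := by
          rw [Finset.sum_const, nsmul_eq_mul]
      _ ≤ ∑ g ∈ Finset.univ.filter P, opNorm (Rmat g) ^ (2*k) := by
          apply Finset.sum_le_sum
          intro g hg
          exact pow_le_pow_left₀ ht0.le (Finset.mem_filter.mp hg).2 _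
      _ ≤ ∑ g : Sym2 (Fin n) → Bool, opNorm (Rmat g) ^ (2*k) := by
          apply Finset.sum_le_sum_of_subset_of_nonneg (Finset.filter_subset _ _)
          intro g _ _
          exact pow_nonneg (opNorm_nonneg _) _
  have hsum := sum_opnorm_le (n := n) hk1
  have hsq : Real.sqrt n ^ (2*k) = (n:ℝ) ^ k := by
    rw [pow_mul, Real.sq_sqrt hn0.le]
  have ht2k : t ^ (2*k) = Real.exp 1 ^ (2*k) * ((n:ℝ)^k * (L+2) ^ (2*k)) := by
    rw [htdef, mul_pow, mul_pow, hsq]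
    ring
  have he2k : (n:ℝ) ≤ ε * Real.exp 1 ^ (2*k) := by
    rw [Real.exp_one_pow]
    have hexp : (n:ℝ) / ε = Real.exp L := (Real.exp_log (by positivity)).symm
    have h3 : Real.exp L ≤ Real.exp (2*(k:ℝ)) := Real.exp_le_exp.mpr h2k_ge
    have h4 : ((2*k : ℕ) : ℝ) = 2*(k:ℝ) := by push_cast; ring
    calc (n:ℝ) = ε * ((n:ℝ)/ε) := by field_simp
      _ ≤ ε * Real.exp (2*(k:ℝ)) := by
          apply mul_le_mul_of_nonneg_left _ hε0.le
          rw [← hexp] at h3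
          exact h3
      _ = ε * Real.exp ((2*k : ℕ) : ℝ) := by rw [h4]
  have hk1pow : ((k:ℝ)+1) ^ (2*k) ≤ (L+2) ^ (2*k) :=
    pow_le_pow_left₀ (by positivity) hk1s _
  have key : (n:ℝ)^(k+1) * ((k:ℝ)+1)^(2*k) ≤ ε * t ^ (2*k) := by
    calc (n:ℝ)^(k+1) * ((k:ℝ)+1)^(2*k)
        = (n:ℝ) * ((n:ℝ)^k * ((k:ℝ)+1)^(2*k)) := by ring
      _ ≤ (ε * Real.exp 1 ^ (2*k)) * ((n:ℝ)^k * (L+2)^(2*k)) := by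
          apply mul_le_mul he2k _ (by positivity) (by positivity)
          exact mul_le_mul_of_nonneg_left hk1pow (by positivity)
      _ = ε * t ^ (2*k) := by rw [ht2k]; ring
  have hcard : ((Finset.univ.filter P).card : ℝ) ≤ ε * N := by
    have hchain : ((Finset.univ.filter P).card : ℝ) * t ^ (2*k) ≤ (ε * N) * t ^ (2*k) := by
      calc ((Finset.univ.filter P).card : ℝ) * t ^ (2*k)
          ≤ N * ((n:ℝ)^(k+1) * ((k:ℝ)+1)^(2*k)) := le_trans hmarkov hsum
        _ ≤ N * (ε * t ^ (2*k)) := mul_le_mul_of_nonneg_left key hN0.le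
        _ = (ε * N) * t ^ (2*k) := by ring
    exact le_of_mul_le_mul_right hchain (by positivity)
  unfold Pr
  rw [div_le_iff₀ hN0]
  calc ((Finset.univ.filter P).card : ℝ) ≤ ε * N := hcard
    _ = ε * N := rfl
end

section
/- Let k ≥ 1 be an integer and let i_1,…,i_{2k} ∈ {1,…,n}, with i_{2k+1} := i_1. If E[∏_{j=1}^{2k} R(i_j, i_{j+1})] ≠ 0, then the number of distinct values among i_1,…,i_{2k} is at most k+1. Moreover this bound is sharp: if n ≥ k+1, there exist i_1,…,i_{2k} ∈ {1,…,n} taking exactly k+1 distinct values for which E[∏_{j=1}^{2k} R(i_j, i_{j+1})] = 1. -/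
lemma sgn_sq (b : Bool) : sgn b * sgn b = 1 := by cases b <;> simp [sgn]

lemma sgn_not (b : Bool) : sgn (!b) = -sgn b := by cases b <;> simp [sgn]

lemma prod_half (G : ℕ → ℝ) (m : ℕ) :
    ∏ j ∈ Finset.range (2 * m), G (j / 2) = ∏ j ∈ Finset.range m, (G j * G j) := by
  induction m with
  | zero => simp
  | succ m ih =>
    rw [show 2 * (m + 1) = (2 * m + 1) + 1 by ring, Finset.prod_range_succ,
      Finset.prod_range_succ, Finset.prod_range_succ, ih,
      show (2 * m) / 2 = m by omega, show (2 * m + 1) / 2 = m by omega]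
    ring

theorem stmt3 (n k : ℕ) (hn : 1 ≤ n) (hk : 1 ≤ k) :
    (∀ i : Fin (2 * k) → Fin n,
        Ex (fun g => ∏ j : Fin (2 * k), Rmat g (i j) (i (cyc j))) ≠ 0 →
        (Finset.univ.image i).card ≤ k + 1) ∧
    (k + 1 ≤ n →
      ∃ i : Fin (2 * k) → Fin n,
        (Finset.univ.image i).card = k + 1 ∧
        Ex (fun g => ∏ j : Fin (2 * k), Rmat g (i j) (i (cyc j))) = 1) := by
  classical
  have hNpos : 0 < 2 * k := by omega
  constructor
  · -- Part 1
    intro i hEx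
    set e : Fin (2 * k) → Sym2 (Fin n) := fun j => s(i j, i (cyc j)) with he
    set S : ℝ := ∑ g : Sym2 (Fin n) → Bool, ∏ j, Rmat g (i j) (i (cyc j)) with hS
    have hSne : S ≠ 0 := by
      intro h
      apply hEx
      simp only [Ex]
      rw [← hS, h, zero_div]
    -- no loops
    have hA : ∀ j, i j ≠ i (cyc j) := by
      intro j hj
      apply hSne
      apply Finset.sum_eq_zero
      intro g _
      apply Finset.prod_eq_zero (Finset.mem_univ j)
      simp [Rmat, hj]
    have hfac : ∀ (g : Sym2 (Fin n) → Bool) (j : Fin (2 * k)),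
        Rmat g (i j) (i (cyc j)) = sgn (g (e j)) := by
      intro g j
      simp [Rmat, hA j, he]
    -- every edge multiplicity is even
    have hB : ∀ x : Sym2 (Fin n),
        Even ((Finset.univ.filter (fun j => e j = x)).card) := by
      intro x
      by_contra hodd
      apply hSne
      set φ : (Sym2 (Fin n) → Bool) → (Sym2 (Fin n) → Bool) :=
        fun g => Function.update g x (!g x) with hφ
      have hinv : Function.Involutive φ := by
        intro g
        funext y
        by_cases hy : y = x <;> simp [hφ, Function.update_apply, hy]
      have hflip : ∀ g : Sym2 (Fin n) → Bool,
          (∏ j, Rmat (φ g) (i j) (i (cyc j))) = - ∏ j, Rmat g (i j) (i (cyc j)) := by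
        intro g
        have hstep : ∀ j, Rmat (φ g) (i j) (i (cyc j))
            = (if e j = x then (-1 : ℝ) else 1) * Rmat g (i j) (i (cyc j)) := by
          intro j
          rw [hfac, hfac, hφ]
          simp only [Function.update_apply]
          by_cases h : e j = x
          · simp [h, sgn_not]
          · simp [h]
        calc (∏ j, Rmat (φ g) (i j) (i (cyc j)))
            = ∏ j, ((if e j = x then (-1 : ℝ) else 1) * Rmat g (i j) (i (cyc j))) :=
              Finset.prod_congr rfl (fun j _ => hstep j)
          _ = (∏ j, (if e j = x then (-1 : ℝ) else 1)) * ∏ j, Rmat g (i j) (i (cyc j)) :=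
              Finset.prod_mul_distrib
          _ = - ∏ j, Rmat g (i j) (i (cyc j)) := by
              rw [Finset.prod_ite, Finset.prod_const, Finset.prod_const, one_pow, mul_one,
                (Nat.not_even_iff_odd.mp hodd).neg_one_pow, neg_one_mul]
      have h1 : ∑ g, (∏ j, Rmat (φ g) (i j) (i (cyc j))) = S :=
        Fintype.sum_bijective φ hinv.bijective _ _ (fun _ => rfl)
      have h2 : ∑ g, (∏ j, Rmat (φ g) (i j) (i (cyc j))) = -S := by
        calc ∑ g, (∏ j, Rmat (φ g) (i j) (i (cyc j)))
            = ∑ g, - (∏ j, Rmat g (i j) (i (cyc j))) :=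
              Finset.sum_congr rfl (fun g _ => hflip g)
          _ = - ∑ g, (∏ j, Rmat g (i j) (i (cyc j))) := by
              rw [Finset.sum_neg_distrib]
          _ = -S := by rw [← hS]
      have : S = -S := h1 ▸ h2
      linarith
    -- at most k distinct edges
    set EE := Finset.univ.image e with hEE
    have hfib : ∀ x ∈ EE, 2 ≤ (Finset.univ.filter (fun j => e j = x)).card := by
      intro x hx
      obtain ⟨j, _, hj⟩ := Finset.mem_image.mp hx
      have h1 : 0 < (Finset.univ.filter (fun j => e j = x)).card :=
        Finset.card_pos.mpr ⟨j, Finset.mem_filter.mpr ⟨Finset.mem_univ _, hj⟩⟩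
      obtain ⟨m, hm⟩ := hB x
      omega
    have hEcard : EE.card ≤ k := by
      have h1 : (Finset.univ : Finset (Fin (2 * k))).card
          = ∑ x ∈ EE, (Finset.univ.filter (fun j => e j = x)).card :=
        Finset.card_eq_sum_card_fiberwise
          (fun j _ => Finset.mem_image_of_mem e (Finset.mem_univ j))
      have h2 : EE.card • 2 ≤ ∑ x ∈ EE, (Finset.univ.filter (fun j => e j = x)).card :=
        Finset.card_nsmul_le_sum _ _ _ hfib
      have h3 : (Finset.univ : Finset (Fin (2 * k))).card = 2 * k := by simp
      simp only [smul_eq_mul] at h2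
      omega
    -- vertex bound
    set V := Finset.univ.image i with hV
    set j0 : Fin (2 * k) := ⟨0, hNpos⟩ with hj0
    set J : Fin n → Finset (Fin (2 * k)) := fun v => Finset.univ.filter (fun j => i j = v) with hJ
    have hJne : ∀ v ∈ V, (J v).Nonempty := by
      intro v hv
      obtain ⟨j, _, hj⟩ := Finset.mem_image.mp hv
      exact ⟨j, Finset.mem_filter.mpr ⟨Finset.mem_univ _, hj⟩⟩
    set t : Fin n → Fin (2 * k) := fun v =>
      if h : (J v).Nonempty then (J v).min' h else j0 with ht
    have ht_mem : ∀ v ∈ V, i (t v) = v := by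
      intro v hv
      have h := hJne v hv
      have h2 := (J v).min'_mem h
      simp only [hJ, Finset.mem_filter] at h2
      simp only [ht, dif_pos h]
      exact h2.2
    have ht_min : ∀ v ∈ V, ∀ j : Fin (2 * k), i j = v → t v ≤ j := by
      intro v hv j hj
      have h := hJne v hv
      simp only [ht, dif_pos h]
      exact Finset.min'_le (J v) j (by
        simp only [hJ, Finset.mem_filter]
        exact ⟨Finset.mem_univ _, hj⟩)
    have ht_pos : ∀ v ∈ V, v ≠ i j0 → 1 ≤ (t v : ℕ) := by
      intro v hv hv0
      by_contra h
      have h0 : t v = j0 := Fin.ext (show (t v : ℕ) = 0 by omega)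
      have := ht_mem v hv
      rw [h0] at this
      exact hv0 this.symm
    set Φ : Fin n → Sym2 (Fin n) := fun v =>
      e ⟨(t v : ℕ) - 1, lt_of_le_of_lt (Nat.sub_le _ _) (t v).isLt⟩ with hΦ
    have hΦ_eq : ∀ v ∈ V, v ≠ i j0 →
        Φ v = s(i ⟨(t v : ℕ) - 1, lt_of_le_of_lt (Nat.sub_le _ _) (t v).isLt⟩, v) := by
      intro v hv hv0
      have h1 := ht_pos v hv hv0
      have hc : cyc (⟨(t v : ℕ) - 1, lt_of_le_of_lt (Nat.sub_le _ _) (t v).isLt⟩ : Fin (2 * k))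
          = t v := by
        apply Fin.ext
        simp only [cyc]
        rw [Nat.sub_add_cancel h1, Nat.mod_eq_of_lt (t v).isLt]
      simp only [hΦ, he, hc, ht_mem v hv]
    have hmaps : ∀ v ∈ V.erase (i j0), Φ v ∈ EE :=
      fun v _ => Finset.mem_image_of_mem e (Finset.mem_univ _)
    have hinjOn : Set.InjOn Φ (V.erase (i j0)) := by
      intro v hv w hw hvw
      simp only [Finset.coe_erase, Set.mem_diff, Finset.mem_coe, Set.mem_singleton_iff] at hv hw
      by_contra hne
      rw [hΦ_eq v hv.1 hv.2, hΦ_eq w hw.1 hw.2, Sym2.eq_iff] at hvw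
      rcases hvw with ⟨_, h⟩ | ⟨h1, h2⟩
      · exact hne h
      · have hv1 := ht_pos v hv.1 hv.2
        have hw1 := ht_pos w hw.1 hw.2
        have hav : t w ≤ ⟨(t v : ℕ) - 1, lt_of_le_of_lt (Nat.sub_le _ _) (t v).isLt⟩ :=
          ht_min w hw.1 _ h1
        have haw : t v ≤ ⟨(t w : ℕ) - 1, lt_of_le_of_lt (Nat.sub_le _ _) (t w).isLt⟩ :=
          ht_min v hv.1 _ h2.symm
        rw [Fin.le_def] at hav haw
        simp only at hav haw
        omega
    have hcard1 : (V.erase (i j0)).card ≤ EE.card :=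
      Finset.card_le_card_of_injOn Φ hmaps hinjOn
    have hmem0 : i j0 ∈ V := Finset.mem_image_of_mem i (Finset.mem_univ _)
    have hcard2 : (V.erase (i j0)).card = V.card - 1 := Finset.card_erase_of_mem hmem0
    have hVpos : 1 ≤ V.card := Finset.card_pos.mpr ⟨_, hmem0⟩
    omega
  · -- Part 2
    intro hkn
    set i : Fin (2 * k) → Fin n := fun j =>
      if (j : ℕ) % 2 = 0 then ⟨0, by omega⟩
      else ⟨(j : ℕ) / 2 + 1, by have := j.isLt; omega⟩ with hi
    refine ⟨i, ?_, ?_⟩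
    · -- cardinality
      have himg : Finset.univ.image i
          = Finset.univ.image (fun m : Fin (k + 1) => (⟨(m : ℕ), by omega⟩ : Fin n)) := by
        ext x
        simp only [Finset.mem_image, Finset.mem_univ, true_and]
        constructor
        · rintro ⟨j, rfl⟩
          by_cases hj : (j : ℕ) % 2 = 0
          · exact ⟨⟨0, by omega⟩, by simp [hi, hj]⟩
          · refine ⟨⟨(j : ℕ) / 2 + 1, by have := j.isLt; omega⟩, ?_⟩
            simp [hi, hj]
        · rintro ⟨m, rfl⟩
          by_cases hm : (m : ℕ) = 0
          · refine ⟨⟨0, hNpos⟩, ?_⟩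
            simp [hi, hm, Fin.ext_iff]
          · refine ⟨⟨2 * (m : ℕ) - 1, by have := m.isLt; omega⟩, ?_⟩
            have h1 : (2 * (m : ℕ) - 1) % 2 = 1 := by omega
            simp only [hi, h1]
            simp [Fin.ext_iff]
            omega
      rw [himg, Finset.card_image_of_injective _ (fun a b hab => by
        apply Fin.ext
        simpa [Fin.ext_iff] using hab)]
      simp
    · -- expectation is 1
      have hprod : ∀ g : Sym2 (Fin n) → Bool,
          (∏ j : Fin (2 * k), Rmat g (i j) (i (cyc j))) = 1 := by
        intro g
        set G : ℕ → ℝ := fun m =>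
          sgn (g s((⟨0, by omega⟩ : Fin n), (⟨min (m + 1) k, by omega⟩ : Fin n))) with hG
        have happ : ∀ (m : ℕ) (hm : m < 2 * k),
            i ⟨m, hm⟩ = if m % 2 = 0 then (⟨0, by omega⟩ : Fin n)
              else ⟨m / 2 + 1, by omega⟩ := fun m hm => rfl
        have hGj : ∀ j : Fin (2 * k), Rmat g (i j) (i (cyc j)) = G ((j : ℕ) / 2) := by
          intro j
          have hjlt := j.isLt
          by_cases hj : (j : ℕ) % 2 = 0
          · -- even position
            have hlt : (j : ℕ) + 1 < 2 * k := by omega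
            have hc : ((j : ℕ) + 1) % (2 * k) = (j : ℕ) + 1 := Nat.mod_eq_of_lt hlt
            have hij : i j = ⟨0, by omega⟩ := by
              rw [← Fin.eta j j.isLt, happ, if_pos hj]
            have hicj : i (cyc j) = ⟨min ((j : ℕ) / 2 + 1) k, by omega⟩ := by
              simp only [cyc]
              rw [happ, if_neg (by rw [hc]; omega)]
              exact Fin.ext (show ((j : ℕ) + 1) % (2 * k) / 2 + 1
                = min ((j : ℕ) / 2 + 1) k by rw [hc]; omega)
            have hne : (⟨0, by omega⟩ : Fin n) ≠ ⟨min ((j : ℕ) / 2 + 1) k, by omega⟩ := by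
              simp only [ne_eq, Fin.mk.injEq]
              omega
            rw [hij, hicj, Rmat]
            simp only [Matrix.of_apply, if_neg hne, hG]
          · -- odd position
            have hc2 : (((j : ℕ) + 1) % (2 * k)) % 2 = 0 := by
              by_cases hlast : (j : ℕ) = 2 * k - 1
              · have h5 : (j : ℕ) + 1 = 2 * k := by omega
                rw [h5, Nat.mod_self]
              · rw [Nat.mod_eq_of_lt (show (j : ℕ) + 1 < 2 * k by omega)]
                omega
            have hij : i j = ⟨min ((j : ℕ) / 2 + 1) k, by omega⟩ := by
              rw [← Fin.eta j j.isLt, happ, if_neg hj]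
              exact Fin.ext (show (j : ℕ) / 2 + 1 = min ((j : ℕ) / 2 + 1) k by omega)
            have hicj : i (cyc j) = ⟨0, by omega⟩ := by
              simp only [cyc]
              rw [happ, if_pos hc2]
            have hne : (⟨min ((j : ℕ) / 2 + 1) k, by omega⟩ : Fin n) ≠ ⟨0, by omega⟩ := by
              simp only [ne_eq, Fin.mk.injEq]
              omega
            rw [hij, hicj, Rmat]
            simp only [Matrix.of_apply, if_neg hne, hG]
            rw [Sym2.eq_swap]
        calc (∏ j : Fin (2 * k), Rmat g (i j) (i (cyc j)))
            = ∏ j : Fin (2 * k), G ((j : ℕ) / 2) := Finset.prod_congr rfl (fun j _ => hGj j)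
          _ = ∏ j ∈ Finset.range (2 * k), G (j / 2) :=
              Fin.prod_univ_eq_prod_range (fun m => G (m / 2)) (2 * k)
          _ = ∏ j ∈ Finset.range k, (G j * G j) := prod_half G k
          _ = 1 := by
              apply Finset.prod_eq_one
              intro x _
              exact sgn_sq _
      have hcard : ((Fintype.card (Sym2 (Fin n) → Bool) : ℝ)) ≠ 0 := by
        simp [Fintype.card_ne_zero]
      simp only [Ex, hprod, Finset.sum_const, Finset.card_univ, nsmul_eq_mul, mul_one]
      exact div_self hcard
end

section
/- Let n ≥ 1 and let b ≥ c ≥ 0 be integers with c ≤ b. The number of tuples (d_1,…,d_b) ∈ {1,…,n}^b whose set of coordinate values has size at most b − c is at most C(b,c)·n^{b−c}·(b−c)^c, which in turn is at most b^{2c}·n^{b−c}. -/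
open Finset

/-- Representative extraction: image small gives a set `S` of `c` coordinates
whose values all occur outside `S`. -/
lemma key_rep {n b : ℕ} (c : ℕ) (hcb : c ≤ b) (d : Fin b → Fin n)
    (hd : (Finset.univ.image d).card ≤ b - c) :
    ∃ S : Finset (Fin b), S.card = c ∧ ∀ i ∈ S, ∃ j, j ∉ S ∧ d j = d i := by
  classical
  set R : Finset (Fin b) := Finset.univ.filter (fun j => ∀ k, d k = d j → j ≤ k) with hR
  have hinj : Set.InjOn d R := by
    intro x hx y hy hxy
    simp only [hR, mem_coe, mem_filter, mem_univ, true_and] at hx hy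
    exact le_antisymm (hx y hxy.symm) (hy x hxy)
  have hRcard : R.card ≤ b - c := by
    calc R.card = (R.image d).card := (Finset.card_image_of_injOn hinj).symm
    _ ≤ (Finset.univ.image d).card :=
        Finset.card_le_card (Finset.image_subset_image (Finset.subset_univ R))
    _ ≤ b - c := hd
  have hcompl : c ≤ Rᶜ.card := by
    have : Rᶜ.card = b - R.card := by
      simp [Finset.card_compl]
    omega
  obtain ⟨S, hSsub, hScard⟩ := Finset.exists_subset_card_eq hcompl
  refine ⟨S, hScard, fun i hi => ?_⟩
  -- take the minimal index with the same value
  set T : Finset (Fin b) := Finset.univ.filter (fun k => d k = d i) with hT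
  have hTne : T.Nonempty := ⟨i, by simp [hT]⟩
  refine ⟨T.min' hTne, ?_, ?_⟩
  · have hmem : T.min' hTne ∈ R := by
      have hdmin : d (T.min' hTne) = d i := by
        have := T.min'_mem hTne
        simpa [hT] using this
      simp only [hR, mem_filter, mem_univ, true_and]
      intro k hk
      exact T.min'_le k (by simp [hT, hk.trans hdmin])
    intro hcon
    exact (Finset.mem_compl.mp (hSsub hcon)) hmem
  · have := T.min'_mem hTne
    simpa [hT] using this

lemma count_one {n b : ℕ} (c : ℕ) (hcb : c ≤ b) (S : Finset (Fin b)) (hS : S.card = c) :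
    (Finset.univ.filter (fun d : Fin b → Fin n =>
        ∀ i ∈ S, ∃ j, j ∉ S ∧ d j = d i)).card ≤ n ^ (b - c) * (b - c) ^ c := by
  classical
  set A := Finset.univ.filter (fun d : Fin b → Fin n =>
        ∀ i ∈ S, ∃ j, j ∉ S ∧ d j = d i) with hA
  rcases A.eq_empty_or_nonempty with h | ⟨d₀, hd₀⟩
  · simp [h]
  have hScompl : Sᶜ.card = b - c := by simp [Finset.card_compl, hS]
  rcases S.eq_empty_or_nonempty with hSe | ⟨i₀, hi₀⟩
  · have hc0 : c = 0 := by rw [hSe] at hS; simpa using hS.symm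
    subst hc0
    have : A.card ≤ Fintype.card (Fin b → Fin n) := by
      simpa using Finset.card_le_card (Finset.subset_univ A)
    simpa using this
  -- S nonempty: get a point of Sᶜ
  have hd₀' : ∀ i ∈ S, ∃ j, j ∉ S ∧ d₀ j = d₀ i := by
    simpa [hA] using hd₀
  obtain ⟨j₀, hj₀, -⟩ := hd₀' i₀ hi₀
  haveI : Nonempty ((Sᶜ : Finset (Fin b)) : Type) := ⟨⟨j₀, Finset.mem_compl.mpr hj₀⟩⟩
  set f : (Fin b → Fin n) → (((Sᶜ : Finset (Fin b)) → Fin n) × (S → (Sᶜ : Finset (Fin b)))) :=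
    fun d => (fun j => d j.1,
      fun i => if h : ∃ j, j ∉ S ∧ d j = d i.1 then
          ⟨h.choose, Finset.mem_compl.mpr h.choose_spec.1⟩
        else Classical.arbitrary _) with hf
  have hinj : Set.InjOn f A := by
    intro d₁ h₁ d₂ h₂ hfe
    have h₁' : ∀ i ∈ S, ∃ j, j ∉ S ∧ d₁ j = d₁ i := by simpa [hA] using h₁
    have h₂' : ∀ i ∈ S, ∃ j, j ∉ S ∧ d₂ j = d₂ i := by simpa [hA] using h₂
    have hfst : ∀ j : (Sᶜ : Finset (Fin b)), d₁ j.1 = d₂ j.1 := by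
      intro j; exact congrFun (congrArg Prod.fst hfe) j
    have hsnd := congrArg Prod.snd hfe
    funext x
    by_cases hx : x ∈ S
    · have e₁ : ∃ j, j ∉ S ∧ d₁ j = d₁ x := h₁' x hx
      have e₂ : ∃ j, j ∉ S ∧ d₂ j = d₂ x := h₂' x hx
      have hxeq : f d₁ = f d₂ := hfe
      have hc : (f d₁).2 ⟨x, hx⟩ = (f d₂).2 ⟨x, hx⟩ := congrFun hsnd ⟨x, hx⟩
      simp only [hf, dif_pos e₁, dif_pos e₂] at hc
      have hch : e₁.choose = e₂.choose := congrArg Subtype.val hc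
      calc d₁ x = d₁ e₁.choose := e₁.choose_spec.2.symm
        _ = d₂ e₁.choose := hfst ⟨e₁.choose, Finset.mem_compl.mpr e₁.choose_spec.1⟩
        _ = d₂ e₂.choose := by rw [hch]
        _ = d₂ x := e₂.choose_spec.2
    · exact hfst ⟨x, Finset.mem_compl.mpr hx⟩
  have := Finset.card_le_card_of_injOn f (fun _ _ => Finset.mem_univ _) hinj
  calc A.card ≤ (Finset.univ :
      Finset (((Sᶜ : Finset (Fin b)) → Fin n) × (S → (Sᶜ : Finset (Fin b))))).card := this
    _ = n ^ (b - c) * (b - c) ^ c := by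
        simp [Fintype.card_fun, hScompl, hS]

theorem stmt4 (n b c : ℕ) (hn : 1 ≤ n) (hcb : c ≤ b) :
    ((Finset.univ.filter fun d : Fin b → Fin n =>
          (Finset.univ.image d).card ≤ b - c).card
        ≤ Nat.choose b c * n ^ (b - c) * (b - c) ^ c) ∧
    Nat.choose b c * n ^ (b - c) * (b - c) ^ c ≤ b ^ (2 * c) * n ^ (b - c) := by
  classical
  constructor
  · have hsub : (Finset.univ.filter fun d : Fin b → Fin n =>
          (Finset.univ.image d).card ≤ b - c) ⊆
        (Finset.powersetCard c (Finset.univ : Finset (Fin b))).biUnion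
          (fun S => Finset.univ.filter (fun d : Fin b → Fin n =>
            ∀ i ∈ S, ∃ j, j ∉ S ∧ d j = d i)) := by
      intro d hd
      simp only [Finset.mem_filter, Finset.mem_univ, true_and] at hd
      obtain ⟨S, hScard, hSprop⟩ := key_rep c hcb d hd
      refine Finset.mem_biUnion.mpr ⟨S, ?_, ?_⟩
      · simp [Finset.mem_powersetCard, hScard]
      · simp only [Finset.mem_filter, Finset.mem_univ, true_and]
        exact hSprop
    calc (Finset.univ.filter fun d : Fin b → Fin n =>
          (Finset.univ.image d).card ≤ b - c).card
        ≤ ((Finset.powersetCard c (Finset.univ : Finset (Fin b))).biUnion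
          (fun S => Finset.univ.filter (fun d : Fin b → Fin n =>
            ∀ i ∈ S, ∃ j, j ∉ S ∧ d j = d i))).card := Finset.card_le_card hsub
      _ ≤ ∑ S ∈ Finset.powersetCard c (Finset.univ : Finset (Fin b)),
            (Finset.univ.filter (fun d : Fin b → Fin n =>
              ∀ i ∈ S, ∃ j, j ∉ S ∧ d j = d i)).card := Finset.card_biUnion_le
      _ ≤ ∑ S ∈ Finset.powersetCard c (Finset.univ : Finset (Fin b)),
            (n ^ (b - c) * (b - c) ^ c) := by
          refine Finset.sum_le_sum fun S hS => ?_
          have : S.card = c := (Finset.mem_powersetCard.mp hS).2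
          exact count_one c hcb S this
      _ = Nat.choose b c * n ^ (b - c) * (b - c) ^ c := by
          rw [Finset.sum_const, smul_eq_mul, Finset.card_powersetCard]
          simp [mul_assoc]
  · have h1 : Nat.choose b c ≤ b ^ c := Nat.choose_le_pow b c
    have h2 : (b - c) ^ c ≤ b ^ c := Nat.pow_le_pow_left (Nat.sub_le b c) c
    calc Nat.choose b c * n ^ (b - c) * (b - c) ^ c
        ≤ b ^ c * n ^ (b - c) * b ^ c :=
          Nat.mul_le_mul (Nat.mul_le_mul_right _ h1) h2
      _ = b ^ (2 * c) * n ^ (b - c) := by rw [two_mul, pow_add]; ring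
end

section
/- Let M be a nonzero real m×n matrix such that M = Σ_{i=1}^{s} c_i·u_i·v_iᵀ for some vectors u_i ∈ ℝ^m, v_i ∈ ℝ^n and positive real coefficients c_1,…,c_s. Then ‖M‖ ≥ ‖M‖_Fr² / (Σ_{i=1}^{s} c_i·‖u_i‖·‖v_i‖), where ‖M‖ is the operator norm, ‖M‖_Fr = √(Σ_{i,j} M(i,j)²) is the Frobenius norm, and ‖u_i‖, ‖v_i‖ are Euclidean norms. -/
noncomputable def frobNorm {α β : Type*} [Fintype α] [Fintype β] (M : Matrix α β ℝ) : ℝ :=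
  Real.sqrt (∑ a, ∑ b, (M a b) ^ 2)

noncomputable def vecNorm {α : Type*} [Fintype α] (u : α → ℝ) : ℝ :=
  Real.sqrt (∑ a, (u a) ^ 2)


open Matrix
lemma vecNorm_eq {n : ℕ} (x : Fin n → ℝ) :
    ‖((WithLp.equiv 2 (Fin n → ℝ)).symm x : EuclideanSpace ℝ (Fin n))‖ = vecNorm x := by
  unfold vecNorm
  rw [EuclideanSpace.norm_eq]
  congr 1
  simp [sq_abs]

lemma key {m n : ℕ} (M : Matrix (Fin m) (Fin n) ℝ) (w : Fin m → ℝ) (x : Fin n → ℝ) :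
    w ⬝ᵥ M.mulVec x ≤ opNorm M * (vecNorm w * vecNorm x) := by
  set w' : EuclideanSpace ℝ (Fin m) := (WithLp.equiv 2 _).symm w
  set x' : EuclideanSpace ℝ (Fin n) := (WithLp.equiv 2 _).symm x
  have h1 : w ⬝ᵥ M.mulVec x = inner (𝕜 := ℝ) w' ((LinearMap.toContinuousLinearMap (Matrix.toEuclideanLin M)) x') := by
    simp [w', x', inner, dotProduct, mul_comm]

  rw [h1]
  calc inner (𝕜 := ℝ) w' ((LinearMap.toContinuousLinearMap (Matrix.toEuclideanLin M)) x')
      ≤ ‖w'‖ * ‖(LinearMap.toContinuousLinearMap (Matrix.toEuclideanLin M)) x'‖ :=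
        real_inner_le_norm _ _
    _ ≤ ‖w'‖ * (opNorm M * ‖x'‖) := by
        gcongr
        exact (LinearMap.toContinuousLinearMap (Matrix.toEuclideanLin M)).le_opNorm x'
    _ = opNorm M * (vecNorm w * vecNorm x) := by
        rw [vecNorm_eq, vecNorm_eq]; ring

lemma h2gen {m n s : ℕ} (c : Fin s → ℝ) (u : Fin s → (Fin m → ℝ)) (v : Fin s → (Fin n → ℝ))
    (N : Matrix (Fin m) (Fin n) ℝ) :
    ∑ a, ∑ b, ((∑ i, c i • Matrix.vecMulVec (u i) (v i)) a b) * N a b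
      = ∑ i, c i * (u i ⬝ᵥ N.mulVec (v i)) := by
  simp only [Matrix.sum_apply, Matrix.smul_apply, Matrix.vecMulVec_apply, dotProduct,
    Matrix.mulVec, Finset.sum_mul, Finset.mul_sum, smul_eq_mul]
  conv_lhs => enter [2, a]; rw [Finset.sum_comm]
  rw [Finset.sum_comm]
  refine Finset.sum_congr rfl fun i _ => ?_
  refine Finset.sum_congr rfl fun a _ => ?_
  refine Finset.sum_congr rfl fun b _ => ?_
  ring

theorem stmt18 {m n : ℕ} (M : Matrix (Fin m) (Fin n) ℝ) (hM : M ≠ 0)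
    (s : ℕ) (c : Fin s → ℝ) (u : Fin s → (Fin m → ℝ)) (v : Fin s → (Fin n → ℝ))
    (hc : ∀ i, 0 < c i)
    (hrep : M = ∑ i, c i • Matrix.vecMulVec (u i) (v i)) :
    frobNorm M ^ 2 / (∑ i, c i * vecNorm (u i) * vecNorm (v i)) ≤ opNorm M := by
  set D := ∑ i, c i * vecNorm (u i) * vecNorm (v i) with hDdef
  have hfrob : frobNorm M ^ 2 = ∑ a, ∑ b, (M a b)^2 := by
    unfold frobNorm; rw [Real.sq_sqrt]; positivity
  have h2 : frobNorm M ^ 2 = ∑ i, c i * (u i ⬝ᵥ M.mulVec (v i)) := by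
    rw [hfrob, ← h2gen c u v M]
    refine Finset.sum_congr rfl fun a _ => Finset.sum_congr rfl fun b _ => ?_
    rw [← hrep]; ring
  have hle : frobNorm M ^ 2 ≤ opNorm M * D := by
    rw [h2, hDdef, Finset.mul_sum]
    refine Finset.sum_le_sum fun i _ => ?_
    calc c i * (u i ⬝ᵥ M.mulVec (v i))
        ≤ c i * (opNorm M * (vecNorm (u i) * vecNorm (v i))) :=
          mul_le_mul_of_nonneg_left (key M (u i) (v i)) (hc i).le
      _ = opNorm M * (c i * vecNorm (u i) * vecNorm (v i)) := by ring
  have hpos : 0 < frobNorm M ^ 2 := by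
    rw [hfrob]
    obtain ⟨a, b, hab⟩ : ∃ a b, M a b ≠ 0 := by
      by_contra h; push_neg at h; exact hM (by ext a b; exact h a b)
    exact Finset.sum_pos' (fun _ _ => Finset.sum_nonneg fun _ _ => sq_nonneg _)
      ⟨a, Finset.mem_univ a, Finset.sum_pos' (fun _ _ => sq_nonneg _)
        ⟨b, Finset.mem_univ b, by positivity⟩⟩
  have hD : 0 < D := by
    by_contra h
    push_neg at h
    have hop : 0 ≤ opNorm M := norm_nonneg _
    nlinarith
  rw [div_le_iff₀ hD]
  linarith
end
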